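/- Let n be a positive integer, let τ ∈ (0,1) be such that τn is a positive integer, let p ∈ (0,1/2), and let Y be a random variable with the Binomial(τn, p) distribution. Then for any c > 2e, P( Y ≥ c·n·p / log(1/τ) ) ≤ 2 · exp( −c·n·p / 2 ). -/

import Mathlib

open MeasureTheory ProbabilityTheory ENNReal

theorem binomial_tail_bound
    {Ω : Type*} [MeasurableSpace Ω] (μ : Measure Ω) [IsProbabilityMeasure μ]
    (n : ℕ) (hn : 0 < n) (τ : ℝ) (hτ : τ ∈ Set.Ioo (0:ℝ) 1)
    (N : ℕ) (hN : 0 < N) (hτn : (N : ℝ) = τ * n)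
    (p : ℝ) (hp : p ∈ Set.Ioo (0:ℝ) (1/2))
    (Y : Ω → ℕ) (hmY : Measurable Y)
    (hY : Measure.map Y μ =
      ((PMF.binomial (Real.toNNReal p)
          (Real.toNNReal_le_one.mpr (le_of_lt (lt_trans hp.2 (by norm_num)))) N).map
        Fin.val).toMeasure)
    (c : ℝ) (hc : 2 * Real.exp 1 < c) :
    μ {ω | c * n * p / Real.log (1 / τ) ≤ (Y ω : ℝ)}
      ≤ ENNReal.ofReal (2 * Real.exp (-(c * n * p) / 2)) := by
  obtain ⟨hτ0, hτ1⟩ := hτ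
  obtain ⟨hp0, hp2⟩ := hp
  set t : ℝ := Real.log (1/τ) with ht_def
  have ht : 0 < t := Real.log_pos (by rw [lt_div_iff₀ hτ0]; linarith)
  set ε : ℝ := c * n * p / t with hε_def
  have hc2 : (2:ℝ) < c := lt_trans (by nlinarith [Real.add_one_le_exp (1:ℝ)]) hc
  have hnp : 0 < (n:ℝ) * p := by positivity
  have htε : t * ε = c * n * p := by rw [hε_def]; field_simp
  have hexp_t : Real.exp t = 1/τ := Real.exp_log (by positivity)
  set P := PMF.binomial (Real.toNNReal p)
      (Real.toNNReal_le_one.mpr (le_of_lt (lt_trans hp2 (by norm_num)))) N with hP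
  -- the function
  set f : Ω → ℝ≥0∞ := fun ω => ENNReal.ofReal (Real.exp (t * Y ω)) with hf
  have hmcast : Measurable (fun k : ℕ => ENNReal.ofReal (Real.exp (t * k))) :=
    measurable_from_top
  have hmf : Measurable f := hmcast.comp hmY
  have hset : {ω | ε ≤ (Y ω : ℝ)} = {ω | ENNReal.ofReal (Real.exp (t*ε)) ≤ f ω} := by
    ext ω
    simp only [Set.mem_setOf_eq, hf,
      ENNReal.ofReal_le_ofReal_iff (Real.exp_nonneg _), Real.exp_le_exp]
    exact (mul_le_mul_iff_right₀ ht).symm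
  -- compute the lintegral
  have hlint : ∫⁻ ω, f ω ∂μ ≤ ENNReal.ofReal (Real.exp ((n:ℝ) * p)) := by
    have h1 : ∫⁻ ω, f ω ∂μ
        = ∫⁻ k, ENNReal.ofReal (Real.exp (t * k)) ∂(Measure.map Y μ) :=
      (lintegral_map hmcast hmY).symm
    rw [h1, hY, ← PMF.toMeasure_map _ _ measurable_from_top,
      lintegral_map hmcast measurable_from_top, lintegral_fintype]
    have hval : ∀ a : Fin (N+1), P.toMeasure {a} = P a := fun a =>
      PMF.toMeasure_apply_singleton _ _ (measurableSet_singleton a)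
    simp only [hval]
    set q : ℝ≥0∞ := ENNReal.ofReal p with hq
    have hq1 : q ≤ 1 := ENNReal.ofReal_le_one.mpr (by linarith)
    set E : ℝ≥0∞ := ENNReal.ofReal (Real.exp t) with hE
    have key : ∑ a : Fin (N+1), ENNReal.ofReal (Real.exp (t * (a : ℕ))) * P a
        = (q * E + (1 - q))^N := by
      rw [add_pow, Finset.sum_fin_eq_sum_range]
      apply Finset.sum_congr rfl
      intro i hi
      rw [Finset.mem_range] at hi
      rw [dif_pos hi]
      have hsub : ((Fin.last N - (⟨i, hi⟩ : Fin (N+1))) : ℕ) = N - i := by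
        simp [Fin.sub_def, Fin.last]
      rw [hP, PMF.binomial_apply]
      have hcoe : ((Real.toNNReal p : NNReal) : ℝ≥0∞) = q := rfl
      simp only [hsub, Fin.val_mk, hcoe]
      have hEpow : ENNReal.ofReal (Real.exp (t * (i:ℕ))) = E ^ i := by
        rw [hE, ← ENNReal.ofReal_pow (Real.exp_nonneg _), ← Real.exp_nat_mul,
          mul_comm]
      rw [hEpow]
      ring
    rw [key]
    have hqE : q * E + (1 - q) = ENNReal.ofReal (p * (1/τ) + (1 - p)) := by
      rw [hq, hE, hexp_t, ENNReal.ofReal_add (by positivity) (by linarith),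
        ENNReal.ofReal_mul hp0.le, ← ENNReal.ofReal_one,
        ← ENNReal.ofReal_sub _ hp0.le]
    have hbase0 : 0 ≤ p * (1/τ) + (1 - p) := by
      have := one_div_pos.mpr hτ0
      nlinarith
    rw [hqE, ← ENNReal.ofReal_pow hbase0]
    apply ENNReal.ofReal_le_ofReal
    have hbase : p * (1/τ) + (1 - p) ≤ Real.exp (p * (1/τ - 1)) := by
      have := Real.add_one_le_exp (p * (1/τ - 1))
      nlinarith
    calc (p * (1/τ) + (1 - p))^N ≤ (Real.exp (p * (1/τ - 1)))^N := by
          apply pow_le_pow_left₀ hbase0 hbase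
      _ = Real.exp ((N:ℝ) * (p * (1/τ - 1))) := by
          rw [← Real.exp_nat_mul]
      _ ≤ Real.exp ((n:ℝ) * p) := by
          apply Real.exp_le_exp.mpr
          rw [hτn]
          have h1τ : τ * (1/τ - 1) = 1 - τ := by field_simp
          nlinarith
  -- Markov
  have hεne : ENNReal.ofReal (Real.exp (t*ε)) ≠ 0 := by
    simp [ENNReal.ofReal_eq_zero, not_le, Real.exp_pos]
  have markov : μ {ω | ENNReal.ofReal (Real.exp (t*ε)) ≤ f ω}
      ≤ (∫⁻ ω, f ω ∂μ) / ENNReal.ofReal (Real.exp (t*ε)) :=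
    meas_ge_le_lintegral_div hmf.aemeasurable hεne ENNReal.ofReal_ne_top
  rw [← hset] at markov
  refine le_trans markov (le_trans (ENNReal.div_le_div_right hlint _) ?_)
  rw [← ENNReal.ofReal_div_of_pos (Real.exp_pos _), ← Real.exp_sub, htε]
  apply ENNReal.ofReal_le_ofReal
  have h2 : Real.exp ((n:ℝ)*p - c*n*p) ≤ Real.exp (-(c * n * p) / 2) := by
    apply Real.exp_le_exp.mpr
    nlinarith
  nlinarith [Real.exp_pos (-(c * n * p) / 2)]
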